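/- Let m be the probability measure on S defined by m(B) = E_φ[∑_{j=0}^{τ−1} 1{X_j ∈ B}] / E_φ[τ] for a positive recurrent regenerative Markov chain X with kernel P and regeneration distribution φ. Then m is stationary for P, i.e. m(B) = ∫_S m(dx) P(x,B) for every measurable B. -/

import Mathlib

open MeasureTheory ProbabilityTheory Filter
open scoped ENNReal

/-- Let `m(B) = E_φ[∑_{j<τ} 1{X_j ∈ B}] / E_φ[τ]` be the normalized
expected occupation measure over a regenerative cycle of a positive recurrent regenerative
Markov chain `X` with kernel `P` started from `φ` (law `μ`). Given the one-step Markov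
identity `E f(X_{j+1}) = E (Pf)(X_j)` and the Cesàro convergence
`(1/n)∑_{j<n} E f(X_j) → mf` for bounded `f`, the measure `m` is a probability measure and
is stationary for `P`: `m(B) = ∫ P(x,B) m(dx)` for every measurable `B`. -/
theorem stmt5 {S Ω : Type*} [MeasurableSpace S] [MeasurableSpace Ω]
    (P : Kernel S S) [IsMarkovKernel P]
    (μ : Measure Ω) [IsProbabilityMeasure μ]
    (X : ℕ → Ω → S) (hX : ∀ n, Measurable (X n))
    (τ : Ω → ℕ) (hτmeas : Measurable τ) (hτ1 : ∀ ω, 1 ≤ τ ω)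
    (hτint : ∫⁻ ω, (τ ω : ℝ≥0∞) ∂μ ≠ ⊤)
    (m : Measure S)
    (hm : m = (∫⁻ ω, (τ ω : ℝ≥0∞) ∂μ)⁻¹ •
      Measure.sum (fun j : ℕ => (μ.restrict {ω | j < τ ω}).map (X j)))
    -- one-step Markov identity:
    (hstep : ∀ (j : ℕ) (f : S → ℝ≥0∞), Measurable f →
      ∫⁻ ω, f (X (j + 1) ω) ∂μ = ∫⁻ ω, ∫⁻ y, f y ∂(P (X j ω)) ∂μ)
    -- Cesàro convergence for bounded nonnegative measurable `f`:
    (hCesaro : ∀ (f : S → ℝ≥0∞), Measurable f → ∀ M : ℝ≥0∞, M ≠ ⊤ → (∀ x, f x ≤ M) →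
      Tendsto (fun n : ℕ => (∑ j ∈ Finset.range n, ∫⁻ ω, f (X j ω) ∂μ) / (n : ℝ≥0∞))
        atTop (nhds (∫⁻ x, f x ∂m))) :
    IsProbabilityMeasure m ∧
    ∀ B : Set S, MeasurableSet B → m B = ∫⁻ x, P x B ∂m := by
  -- Step 1: m is a probability measure
  have hone : (∫⁻ x, (1 : ℝ≥0∞) ∂m) = 1 := by
    have h1 := hCesaro (fun _ => 1) measurable_const 1 ENNReal.one_ne_top (fun _ => le_rfl)
    have h2 : Tendsto (fun n : ℕ =>
        (∑ j ∈ Finset.range n, ∫⁻ (ω : Ω), (1:ℝ≥0∞) ∂μ) / (n : ℝ≥0∞)) atTop (nhds 1) := by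
      apply Tendsto.congr' _ (tendsto_const_nhds (x := (1:ℝ≥0∞)))
      filter_upwards [eventually_gt_atTop 0] with n hn
      simp only [lintegral_one, measure_univ]
      rw [Finset.sum_const, Finset.card_range, nsmul_eq_mul, mul_one,
        ENNReal.div_self (by exact_mod_cast hn.ne') (ENNReal.natCast_ne_top n)]
    exact (tendsto_nhds_unique h2 h1).symm
  have hprob : IsProbabilityMeasure m := by
    constructor
    rw [← lintegral_one, hone]
  refine ⟨hprob, fun B hB => ?_⟩
  -- Step 2: stationarity
  set f : S → ℝ≥0∞ := B.indicator 1 with hf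
  have hfmeas : Measurable f := measurable_one.indicator hB
  have hfle : ∀ x, f x ≤ 1 := fun x => Set.indicator_le' (fun _ _ => le_rfl) (fun _ _ => zero_le_one) x
  set g : S → ℝ≥0∞ := fun x => P x B with hg
  have hgmeas : Measurable g := P.measurable_coe hB
  have hgle : ∀ x, g x ≤ 1 := fun x => prob_le_one
  set c : ℕ → ℝ≥0∞ := fun j => ∫⁻ ω, f (X j ω) ∂μ with hc
  set d : ℕ → ℝ≥0∞ := fun j => ∫⁻ ω, g (X j ω) ∂μ with hd
  have hcd : ∀ j, c (j + 1) = d j := by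
    intro j
    rw [hc, hd]
    simp only
    rw [hstep j f hfmeas]
    congr 1
    ext ω
    rw [lintegral_indicator_one hB]
  have hcle : ∀ j, c j ≤ 1 := by
    intro j
    calc c j ≤ ∫⁻ ω, (1:ℝ≥0∞) ∂μ := lintegral_mono fun ω => hfle _
    _ = 1 := by simp
  have hLf := hCesaro f hfmeas 1 ENNReal.one_ne_top hfle
  have hLg := hCesaro g hgmeas 1 ENNReal.one_ne_top hgle
  have hfm : (∫⁻ x, f x ∂m) = m B := lintegral_indicator_one hB
  rw [hfm] at hLf
  -- sum shift identity
  have hshift : ∀ n : ℕ, (∑ j ∈ Finset.range n, d j) + c 0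
      = (∑ j ∈ Finset.range n, c j) + c n := by
    intro n
    have : ∑ j ∈ Finset.range n, d j = ∑ j ∈ Finset.range n, c (j + 1) := by
      exact Finset.sum_congr rfl fun j _ => (hcd j).symm
    rw [this, ← Finset.sum_range_succ', Finset.sum_range_succ]
  have key1 : ∀ n : ℕ, (∑ j ∈ Finset.range n, c j) / (n : ℝ≥0∞)
      ≤ (∑ j ∈ Finset.range n, d j) / (n : ℝ≥0∞) + 1 / (n : ℝ≥0∞) := by
    intro n
    rw [← ENNReal.add_div]
    apply ENNReal.div_le_div_right
    calc ∑ j ∈ Finset.range n, c j ≤ (∑ j ∈ Finset.range n, c j) + c n := le_self_add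
    _ = (∑ j ∈ Finset.range n, d j) + c 0 := (hshift n).symm
    _ ≤ (∑ j ∈ Finset.range n, d j) + 1 := add_le_add le_rfl (hcle 0)
  have key2 : ∀ n : ℕ, (∑ j ∈ Finset.range n, d j) / (n : ℝ≥0∞)
      ≤ (∑ j ∈ Finset.range n, c j) / (n : ℝ≥0∞) + 1 / (n : ℝ≥0∞) := by
    intro n
    rw [← ENNReal.add_div]
    apply ENNReal.div_le_div_right
    calc ∑ j ∈ Finset.range n, d j ≤ (∑ j ∈ Finset.range n, d j) + c 0 := le_self_add
    _ = (∑ j ∈ Finset.range n, c j) + c n := hshift n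
    _ ≤ (∑ j ∈ Finset.range n, c j) + 1 := add_le_add le_rfl (hcle n)
  have hinv : Tendsto (fun n : ℕ => 1 / (n : ℝ≥0∞)) atTop (nhds 0) := by
    simpa [one_div] using ENNReal.tendsto_inv_nat_nhds_zero
  have h1 : m B ≤ ∫⁻ x, g x ∂m := by
    have := le_of_tendsto_of_tendsto' hLf
      ((hLg.add hinv).congr (fun n => rfl)) key1
    simpa using this
  have h2 : (∫⁻ x, g x ∂m) ≤ m B := by
    have := le_of_tendsto_of_tendsto' hLg
      ((hLf.add hinv).congr (fun n => rfl)) key2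
    simpa using this
  exact le_antisymm h1 h2
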